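/- Let x₀ > 0 and for 0 < ε < 1 consider the interval ℓ = [x₀(1−ε), x₀(1+ε)]. Define TP_max(ε) = sup over θ > 0 of (exp(−x₀(1−ε)/θ) − exp(−x₀(1+ε)/θ)). Then lim_{ε→0⁺} TP_max(ε)/ε = 2e^{−1}; in particular TP_max(ε) = 2e^{−1}ε + o(ε) as ε → 0⁺. -/

import Mathlib

open Real Set Filter

lemma mul_exp_neg_le_exp_neg_one (u : ℝ) (_hu : 0 < u) :
    u * Real.exp (-u) ≤ Real.exp (-1) := by
  have h : u ≤ Real.exp (u - 1) := by
    have := Real.add_one_le_exp (u - 1)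
    linarith
  calc u * Real.exp (-u) ≤ Real.exp (u - 1) * Real.exp (-u) :=
        mul_le_mul_of_nonneg_right h (Real.exp_pos _).le
    _ = Real.exp (-1) := by rw [← Real.exp_add]; ring_nf

theorem TPmax_asymptotics (x₀ : ℝ) (hx₀ : 0 < x₀) :
    Tendsto
      (fun ε : ℝ =>
        (⨆ θ : Ioi (0:ℝ),
          (Real.exp (-(x₀ * (1 - ε)) / θ) - Real.exp (-(x₀ * (1 + ε)) / θ))) / ε)
      (nhdsWithin 0 (Ioi 0)) (nhds (2 * Real.exp (-1))) := by
  haveI : Nonempty (Ioi (0:ℝ)) := ⟨⟨1, mem_Ioi.mpr one_pos⟩⟩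
  set L : ℝ → ℝ := fun ε => (Real.exp (ε - 1) - Real.exp (-(1 + ε))) / ε with hL
  set U : ℝ → ℝ := fun ε => 2 / (1 - ε) * Real.exp (-1) with hU
  have hmem : Ioo (0:ℝ) 1 ∈ nhdsWithin (0:ℝ) (Ioi 0) :=
    Ioo_mem_nhdsGT_of_mem (by constructor <;> norm_num)
  -- Tendsto of L
  have hLt : Tendsto L (nhdsWithin 0 (Ioi 0)) (nhds (2 * Real.exp (-1))) := by
    have h1 : HasDerivAt (fun ε : ℝ => Real.exp (ε - 1)) (Real.exp (-1)) 0 := by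
      have := (Real.hasDerivAt_exp ((0:ℝ) - 1)).comp 0 ((hasDerivAt_id (0:ℝ)).sub_const 1)
      simpa [Function.comp_def] using this
    have h2 : HasDerivAt (fun ε : ℝ => Real.exp (-(1 + ε))) (-Real.exp (-1)) 0 := by
      have hi : HasDerivAt (fun ε : ℝ => -(1 + ε)) (-1) 0 := by
        exact ((hasDerivAt_id (0:ℝ)).const_add 1).neg
      have := (Real.hasDerivAt_exp (-(1 + (0:ℝ)))).comp 0 hi
      simpa [Function.comp_def] using this
    have h3 : HasDerivAt (fun ε : ℝ => Real.exp (ε - 1) - Real.exp (-(1 + ε)))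
        (2 * Real.exp (-1)) 0 := by
      have := h1.sub h2
      rw [show (2 * Real.exp (-1)) = Real.exp (-1) - -Real.exp (-1) by ring]; exact this
    have h4 := hasDerivAt_iff_tendsto_slope.mp h3
    have h5 : Tendsto (slope (fun ε : ℝ => Real.exp (ε - 1) - Real.exp (-(1 + ε))) 0)
        (nhdsWithin 0 (Ioi 0)) (nhds (2 * Real.exp (-1))) :=
      h4.mono_left (nhdsWithin_mono 0 (fun x hx => ne_of_gt hx))
    refine h5.congr (fun ε => ?_)
    simp [slope_def_field, hL, div_eq_div_iff]
  -- Tendsto of U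
  have hUt : Tendsto U (nhdsWithin 0 (Ioi 0)) (nhds (2 * Real.exp (-1))) := by
    have hc : ContinuousAt U 0 := by
      apply ContinuousAt.mul _ continuousAt_const
      exact ContinuousAt.div continuousAt_const (by fun_prop) (by norm_num)
    have h6 : Tendsto U (nhdsWithin 0 (Ioi 0)) (nhds (U 0)) :=
      hc.tendsto.mono_left nhdsWithin_le_nhds
    simpa [hU] using h6
  refine tendsto_of_tendsto_of_tendsto_of_le_of_le' hLt hUt ?_ ?_
  · -- L ≤ f
    filter_upwards [hmem] with ε hε
    obtain ⟨hε0, hε1⟩ := hε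
    rw [hL]
    have hbdd : BddAbove (Set.range fun θ : Ioi (0:ℝ) =>
        Real.exp (-(x₀ * (1 - ε)) / θ) - Real.exp (-(x₀ * (1 + ε)) / θ)) := by
      refine ⟨1, ?_⟩
      rintro v ⟨θ, rfl⟩
      have hθ0 : (0:ℝ) < θ := θ.2
      have harg : -(x₀ * (1 - ε)) / (θ:ℝ) ≤ 0 := by
        apply div_nonpos_of_nonpos_of_nonneg _ hθ0.le
        nlinarith
      have h1 : Real.exp (-(x₀ * (1 - ε)) / (θ:ℝ)) ≤ 1 := Real.exp_le_one_iff.mpr harg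
      have h2 : (0:ℝ) < Real.exp (-(x₀ * (1 + ε)) / (θ:ℝ)) := Real.exp_pos _
      simp only
      linarith
    have hle := le_ciSup hbdd (⟨x₀, mem_Ioi.mpr hx₀⟩ : Ioi (0:ℝ))
    have hx : -(x₀ * (1 - ε)) / x₀ = ε - 1 := by field_simp; ring
    have hy : -(x₀ * (1 + ε)) / x₀ = -(1 + ε) := by field_simp
    simp only [hx, hy] at hle
    exact (div_le_div_iff_of_pos_right hε0).mpr hle
  · -- f ≤ U
    filter_upwards [hmem] with ε hε
    obtain ⟨hε0, hε1⟩ := hε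
    have h1ε : 0 < 1 - ε := by linarith
    have key : ∀ θ : Ioi (0:ℝ),
        Real.exp (-(x₀ * (1 - ε)) / θ) - Real.exp (-(x₀ * (1 + ε)) / θ)
          ≤ 2 * ε / (1 - ε) * Real.exp (-1) := by
      rintro ⟨θ, hθ⟩
      have hθ0 : (0:ℝ) < θ := hθ
      simp only
      set u := x₀ * (1 - ε) / θ with hu
      set d := 2 * x₀ * ε / θ with hd
      have hupos : 0 < u := by positivity
      have hdpos : 0 < d := by positivity
      have e1 : -(x₀ * (1 - ε)) / θ = -u := by rw [hu]; ring
      have e2 : -(x₀ * (1 + ε)) / θ = -(u + d) := by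
        rw [hu, hd]; field_simp; ring
      rw [e1, e2]
      have hexp : Real.exp (-(u + d)) = Real.exp (-u) * Real.exp (-d) := by
        rw [← Real.exp_add]; ring_nf
      have hcvx := Real.add_one_le_exp (-d)
      have step1 : Real.exp (-u) - Real.exp (-(u + d)) ≤ d * Real.exp (-u) := by
        rw [hexp]; nlinarith [Real.exp_pos (-u), Real.exp_pos (-d)]
      have step2 : d * Real.exp (-u) = (d / u) * (u * Real.exp (-u)) := by
        field_simp
      have step3 : (d / u) * (u * Real.exp (-u)) ≤ (d / u) * Real.exp (-1) :=
        mul_le_mul_of_nonneg_left (mul_exp_neg_le_exp_neg_one u hupos) (by positivity)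
      have e3 : d / u = 2 * ε / (1 - ε) := by
        rw [hu, hd]; field_simp
      calc Real.exp (-u) - Real.exp (-(u + d)) ≤ d * Real.exp (-u) := step1
        _ = (d / u) * (u * Real.exp (-u)) := step2
        _ ≤ (d / u) * Real.exp (-1) := step3
        _ = 2 * ε / (1 - ε) * Real.exp (-1) := by rw [e3]
    have hsup : (⨆ θ : Ioi (0:ℝ),
        (Real.exp (-(x₀ * (1 - ε)) / θ) - Real.exp (-(x₀ * (1 + ε)) / θ)))
        ≤ 2 * ε / (1 - ε) * Real.exp (-1) := ciSup_le key
    rw [div_le_iff₀ hε0]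
    calc _ ≤ 2 * ε / (1 - ε) * Real.exp (-1) := hsup
      _ = U ε * ε := by rw [hU]; field_simp
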